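/- For the uniform-sampling strategy on strings of length N with sample size k ≤ N/2, where the estimate of the relative Hamming weight of the unsampled part is the relative Hamming weight of the sampled part, the classical error probability satisfies: for every q ∈ {0,1}^N, Pr_τ(|w(q_τ) - w(q_{-τ})| > δ) ≤ 2 exp(-δ² k N / (N+2)), where τ is a uniformly random subset of {1,…,N} of size k. -/

import Mathlib

open Real

noncomputable def chiBF (y : ℝ) : ℝ :=
  (1 + y/2) * Real.exp (-(y/2)) - (1 - y/2) * Real.exp (y/2)

lemma chiBF_hasDeriv (x : ℝ) :
    HasDerivAt chiBF ((x/4) * (Real.exp (x/2) - Real.exp (-(x/2)))) x := by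
  have e1 : HasDerivAt (fun x : ℝ => Real.exp (-(x/2))) (Real.exp (-(x/2)) * (-(1/2))) x := by
    have h := (((hasDerivAt_id x).div_const 2).neg).exp
    simpa using h
  have e2 : HasDerivAt (fun x : ℝ => Real.exp (x/2)) (Real.exp (x/2) * (1/2)) x := by
    have h := ((hasDerivAt_id x).div_const 2).exp
    simpa using h
  have h1 : HasDerivAt (fun x : ℝ => (1 + x/2) * Real.exp (-(x/2)))
      ((1/2) * Real.exp (-(x/2)) + (1 + x/2) * (Real.exp (-(x/2)) * (-(1/2)))) x := by
    have hl : HasDerivAt (fun x : ℝ => 1 + x/2) (1/2) x := by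
      simpa using ((hasDerivAt_id x).div_const 2).const_add 1
    exact hl.mul e1
  have h2 : HasDerivAt (fun x : ℝ => (1 - x/2) * Real.exp (x/2))
      ((-(1/2)) * Real.exp (x/2) + (1 - x/2) * (Real.exp (x/2) * (1/2))) x := by
    have hl : HasDerivAt (fun x : ℝ => 1 - x/2) (-(1/2)) x := by
      simpa using ((hasDerivAt_id x).div_const 2).const_sub 1
    exact hl.mul e2
  have : HasDerivAt chiBF _ x :=
    h1.sub h2
  convert this using 1
  ring

/-- Padé-type bound: `(1 - y/2) e^y ≤ 1 + y/2` for `y ≥ 0`. -/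
lemma pade_aux {y : ℝ} (hy : 0 ≤ y) : (1 - y/2) * Real.exp y ≤ 1 + y/2 := by
  have hmono : MonotoneOn chiBF (Set.Ici (0:ℝ)) := by
    have hdiff : ∀ x : ℝ, DifferentiableAt ℝ chiBF x :=
      fun x => (chiBF_hasDeriv x).differentiableAt
    apply monotoneOn_of_deriv_nonneg (convex_Ici 0)
    · exact fun x _ => (hdiff x).continuousAt.continuousWithinAt
    · exact fun x _ => (hdiff x).differentiableWithinAt
    · intro x hx
      rw [interior_Ici] at hx
      rw [(chiBF_hasDeriv x).deriv]
      have hx0 : (0:ℝ) ≤ x := le_of_lt hx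
      have h : Real.exp (-(x/2)) ≤ Real.exp (x/2) := Real.exp_le_exp.2 (by linarith)
      have h' : (0:ℝ) ≤ Real.exp (x/2) - Real.exp (-(x/2)) := by linarith
      positivity
  have h0 : chiBF 0 = 0 := by simp [chiBF]
  have hge := hmono (Set.mem_Ici.2 le_rfl) (Set.mem_Ici.2 hy) hy
  rw [h0] at hge
  have hχy : (1 - y/2) * Real.exp (y/2) ≤ (1 + y/2) * Real.exp (-(y/2)) := by
    have : 0 ≤ chiBF y := hge
    unfold chiBF at this; linarith
  have hmul := mul_le_mul_of_nonneg_right hχy (le_of_lt (Real.exp_pos (y/2)))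
  calc (1 - y/2) * Real.exp y = (1 - y/2) * Real.exp (y/2) * Real.exp (y/2) := by
        rw [mul_assoc, ← Real.exp_add]; ring_nf
    _ ≤ (1 + y/2) * Real.exp (-(y/2)) * Real.exp (y/2) := hmul
    _ = 1 + y/2 := by rw [mul_assoc, ← Real.exp_add]; simp

noncomputable def GBF (p c : ℝ) : ℝ := p*c + c^2/8 - Real.log (p * Real.exp c + (1-p))

lemma DBF_pos {p : ℝ} (hp0 : 0 ≤ p) (hp1 : p ≤ 1) (c : ℝ) :
    0 < p * Real.exp c + (1-p) := by
  rcases eq_or_lt_of_le hp0 with h | h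
  · simp [← h]
  · have := Real.exp_pos c; nlinarith

lemma GBF_hasDeriv {p : ℝ} (hp0 : 0 ≤ p) (hp1 : p ≤ 1) (c : ℝ) :
    HasDerivAt (GBF p) (p + c/4 - p * Real.exp c / (p * Real.exp c + (1-p))) c := by
  have hD := DBF_pos hp0 hp1 c
  have hin : HasDerivAt (fun c : ℝ => p * Real.exp c + (1-p)) (p * Real.exp c) c := by
    simpa using ((Real.hasDerivAt_exp c).const_mul p).add_const (1-p)
  have hlog : HasDerivAt (fun c : ℝ => Real.log (p * Real.exp c + (1-p)))
      (p * Real.exp c / (p * Real.exp c + (1-p))) c := hin.log (ne_of_gt hD)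
  have hpoly : HasDerivAt (fun c : ℝ => p*c + c^2/8) (p + c/4) c := by
    have h1 : HasDerivAt (fun c : ℝ => p*c) p c := by
      simpa using (hasDerivAt_id c).const_mul p
    have h2 : HasDerivAt (fun c : ℝ => c^2/8) (c/4) c := by
      have h : HasDerivAt (fun c : ℝ => c^2/8) _ c := (hasDerivAt_pow 2 c).div_const 8
      convert h using 1
      simp; ring
    exact h1.add h2
  exact hpoly.sub hlog

lemma GBF_deriv_nonneg {p : ℝ} (hp0 : 0 ≤ p) (hp1 : p ≤ 1) {c : ℝ} (hc : 0 ≤ c) :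
    0 ≤ p + c/4 - p * Real.exp c / (p * Real.exp c + (1-p)) := by
  have hD := DBF_pos hp0 hp1 c
  set v := Real.exp (c/2) with hv
  have hv1 : 1 ≤ v := by
    rw [hv]; simpa using Real.exp_le_exp.2 (by linarith : (0:ℝ) ≤ c/2)
  have hec : Real.exp c = v^2 := by
    rw [hv, sq, ← Real.exp_add]; norm_num
  have hpade : 4*(v-1) ≤ c*(v+1) := by
    have := pade_aux (by linarith : (0:ℝ) ≤ c/2)
    have h2 : (1 - c/4) * v ≤ 1 + c/4 := by
      convert this using 2 <;> ring_nf
    nlinarith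
  have hsq : p*(1-p)*(v+1)^2 ≤ p * Real.exp c + (1-p) := by
    rw [hec]; nlinarith [sq_nonneg (p*v - (1-p))]
  have hkey : 4*(p*(1-p)*(v^2-1)) * (v+1) ≤ (c*(p * Real.exp c + (1-p))) * (v+1) := by
    have hnn1 : 0 ≤ p*(1-p)*(v+1)^2 :=
      mul_nonneg (mul_nonneg hp0 (by linarith)) (sq_nonneg _)
    have hnn2 : 0 ≤ 4*(v-1) := by linarith
    have := mul_le_mul hsq hpade hnn2 (le_of_lt hD)
    nlinarith [this]
  have hkey2 : 4*(p*(1-p)*(v^2-1)) ≤ c*(p * Real.exp c + (1-p)) :=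
    le_of_mul_le_mul_right hkey (by linarith : (0:ℝ) < v+1)
  rw [hec] at hkey2
  rw [sub_nonneg, div_le_iff₀ hD, hec]
  nlinarith [hkey2]

lemma hoeffding_core {p : ℝ} (hp0 : 0 ≤ p) (hp1 : p ≤ 1) (s : ℝ) :
    p * Real.exp s + (1 - p) ≤ Real.exp (p * s + s^2/8) := by
  have main : ∀ p : ℝ, 0 ≤ p → p ≤ 1 → ∀ s : ℝ, 0 ≤ s →
      p * Real.exp s + (1 - p) ≤ Real.exp (p * s + s^2/8) := by
    intro p hp0 hp1 s hs
    have hD := DBF_pos hp0 hp1 s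
    have hmono : MonotoneOn (GBF p) (Set.Ici (0:ℝ)) := by
      have hdiff : ∀ x : ℝ, DifferentiableAt ℝ (GBF p) x :=
        fun x => (GBF_hasDeriv hp0 hp1 x).differentiableAt
      apply monotoneOn_of_deriv_nonneg (convex_Ici 0)
      · exact fun x _ => (hdiff x).continuousAt.continuousWithinAt
      · exact fun x _ => (hdiff x).differentiableWithinAt
      · intro x hx
        rw [interior_Ici] at hx
        rw [(GBF_hasDeriv hp0 hp1 x).deriv]
        exact GBF_deriv_nonneg hp0 hp1 (le_of_lt hx)
    have h0 : GBF p 0 = 0 := by simp [GBF]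
    have hge := hmono (Set.mem_Ici.2 le_rfl) (Set.mem_Ici.2 hs) hs
    rw [h0] at hge
    have hlog : Real.log (p * Real.exp s + (1-p)) ≤ p*s + s^2/8 := by
      unfold GBF at hge; linarith
    have := (Real.log_le_iff_le_exp hD).1 hlog
    linarith
  rcases le_or_gt 0 s with hs | hs
  · exact main p hp0 hp1 s hs
  · have h := main (1-p) (by linarith) (by linarith) (-s) (by linarith)
    have hmul := mul_le_mul_of_nonneg_right h (le_of_lt (Real.exp_pos s))
    calc p * Real.exp s + (1 - p)
        = ((1-p) * Real.exp (-s) + (1 - (1-p))) * Real.exp s := by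
          rw [add_mul, mul_assoc, ← Real.exp_add]; simp; ring
      _ ≤ Real.exp ((1-p) * (-s) + (-s)^2/8) * Real.exp s := hmul
      _ = Real.exp (p * s + s^2/8) := by rw [← Real.exp_add]; ring_nf

open Finset

/-- Double counting: summing over `(k+1)`-subsets equals summing over
`k`-subsets extended by one outside element, up to factor `k+1`. -/
lemma sum_insert_compl {α : Type*} [DecidableEq α] [Fintype α] (k : ℕ) (F : Finset α → ℝ) :
    ∑ τ ∈ powersetCard k (univ : Finset α), ∑ i ∈ τᶜ, F (insert i τ)
      = (k+1 : ℝ) * ∑ σ ∈ powersetCard (k+1) (univ : Finset α), F σ := by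
  have lhs_eq : ∑ τ ∈ powersetCard k (univ : Finset α), ∑ i ∈ τᶜ, F (insert i τ)
      = ∑ p ∈ (powersetCard k (univ : Finset α)).sigma (fun τ => τᶜ), F (insert p.2 p.1) :=
    Finset.sum_sigma' _ _ _
  have rhs_eq : ∑ σ ∈ powersetCard (k+1) (univ : Finset α), ∑ _i ∈ σ, F σ
      = ∑ p ∈ (powersetCard (k+1) (univ : Finset α)).sigma (fun σ => σ), F p.1 :=
    Finset.sum_sigma' _ _ _
  have key : ∑ p ∈ (powersetCard k (univ : Finset α)).sigma (fun τ => τᶜ), F (insert p.2 p.1)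
      = ∑ p ∈ (powersetCard (k+1) (univ : Finset α)).sigma (fun σ => σ), F p.1 := by
    apply Finset.sum_bij' (fun p _ => (⟨insert p.2 p.1, p.2⟩ : (_ : Finset α) × α))
      (fun p _ => (⟨p.1.erase p.2, p.2⟩ : (_ : Finset α) × α))
    · rintro ⟨τ, i⟩ hp
      rw [Finset.mem_sigma] at hp
      obtain ⟨hτ, hi⟩ := hp
      rw [Finset.mem_sigma]
      have hins : i ∉ τ := Finset.mem_compl.1 hi
      constructor
      · rw [Finset.mem_powersetCard]
        exact ⟨Finset.subset_univ _, by
          rw [Finset.card_insert_of_notMem hins, (Finset.mem_powersetCard.1 hτ).2]⟩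
      · exact Finset.mem_insert_self _ _
    · rintro ⟨σ, i⟩ hp
      rw [Finset.mem_sigma] at hp
      obtain ⟨hσ, hi⟩ := hp
      rw [Finset.mem_sigma]
      constructor
      · rw [Finset.mem_powersetCard]
        refine ⟨Finset.subset_univ _, ?_⟩
        rw [Finset.card_erase_of_mem hi, (Finset.mem_powersetCard.1 hσ).2]
        omega
      · exact Finset.mem_compl.2 (Finset.notMem_erase _ _)
    · rintro ⟨τ, i⟩ hp
      rw [Finset.mem_sigma] at hp
      have hins : i ∉ τ := Finset.mem_compl.1 hp.2
      simp [Finset.erase_insert hins]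
    · rintro ⟨σ, i⟩ hp
      rw [Finset.mem_sigma] at hp
      simp [Finset.insert_erase hp.2]
    · rintro ⟨τ, i⟩ _
      rfl
  rw [lhs_eq, key, ← rhs_eq]
  rw [Finset.mul_sum]
  apply Finset.sum_congr rfl
  intro σ hσ
  rw [Finset.sum_const, (Finset.mem_powersetCard.1 hσ).2, nsmul_eq_mul]
  push_cast
  ring

/-- One-step conditional MGF bound (two-point Hoeffding, weighted form). -/
lemma step_scalar {R j : ℝ} (hR0 : 0 ≤ R) (hR : R ≤ j) (hj : 2 ≤ j) (lam C : ℝ) :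
    R * Real.exp (C - lam * ((R-1)/(j-1))) + (j-R) * Real.exp (C - lam * (R/(j-1)))
      ≤ j * Real.exp (C - lam*(R/j) + lam^2/(8*(j-1)^2)) := by
  have hj0 : (0:ℝ) < j := by linarith
  have hj1 : j - 1 ≠ 0 := by intro h; nlinarith
  have hjne : j ≠ 0 := ne_of_gt hj0
  set p := R / j with hp
  have hp0 : 0 ≤ p := div_nonneg hR0 (le_of_lt hj0)
  have hp1 : p ≤ 1 := (div_le_one hj0).2 hR
  set s := lam / (j-1) with hs
  have key := hoeffding_core hp0 hp1 s
  have hYpos : (0:ℝ) < Real.exp (C - lam * (R/(j-1))) := Real.exp_pos _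
  have hmul := mul_le_mul_of_nonneg_left key
    (by positivity : (0:ℝ) ≤ j * Real.exp (C - lam * (R/(j-1))))
  have e1 : Real.exp (C - lam * ((R-1)/(j-1)))
      = Real.exp (C - lam * (R/(j-1))) * Real.exp s := by
    rw [← Real.exp_add]; congr 1; rw [hs]; field_simp; ring
  have e2 : Real.exp (C - lam * (R/(j-1))) * Real.exp (p * s + s^2/8)
      = Real.exp (C - lam*(R/j) + lam^2/(8*(j-1)^2)) := by
    rw [← Real.exp_add]; congr 1; rw [hp, hs]; field_simp; ring
  calc R * Real.exp (C - lam * ((R-1)/(j-1))) + (j-R) * Real.exp (C - lam * (R/(j-1)))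
      = (j * Real.exp (C - lam * (R/(j-1)))) * (p * Real.exp s + (1 - p)) := by
        rw [e1, hp]; field_simp
    _ ≤ (j * Real.exp (C - lam * (R/(j-1)))) * Real.exp (p * s + s^2/8) := hmul
    _ = j * Real.exp (C - lam*(R/j) + lam^2/(8*(j-1)^2)) := by
        rw [mul_assoc, e2]

def xcnt {N : ℕ} (q : Fin N → Bool) (τ : Finset (Fin N)) : ℕ :=
  (τ.filter fun l => q l = true).card

lemma xcnt_le_card {N : ℕ} (q : Fin N → Bool) (τ : Finset (Fin N)) :
    xcnt q τ ≤ τ.card := Finset.card_filter_le _ _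

lemma xcnt_compl_add {N : ℕ} (q : Fin N → Bool) (τ : Finset (Fin N)) :
    xcnt q τ + xcnt q τᶜ = xcnt q (univ : Finset (Fin N)) := by
  unfold xcnt
  rw [← Finset.card_union_of_disjoint
      (Finset.disjoint_filter_filter disjoint_compl_right),
    ← Finset.filter_union, Finset.union_compl]

lemma xcnt_insert {N : ℕ} (q : Fin N → Bool) (τ : Finset (Fin N)) {i : Fin N} (hi : i ∉ τ) :
    xcnt q (insert i τ) = xcnt q τ + (if q i = true then 1 else 0) := by
  unfold xcnt
  rw [Finset.filter_insert]
  split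
  · rw [Finset.card_insert_of_notMem (fun h => hi (Finset.mem_filter.1 h).1)]
  · simp

noncomputable def eBF {N : ℕ} (q : Fin N → Bool) (lam : ℝ) (k : ℕ) (τ : Finset (Fin N)) : ℝ :=
  Real.exp (lam * ((xcnt q univ : ℝ)/(N:ℝ) - ((xcnt q univ : ℝ) - (xcnt q τ : ℝ))/((N:ℝ) - k)))

/-- The exponential-moment bound along the sampling process (Azuma/Serfling style). -/
lemma mgf_bound {N : ℕ} (q : Fin N → Bool) (lam : ℝ) :
    ∀ k, k < N →
    ∑ τ ∈ powersetCard k (univ : Finset (Fin N)), eBF q lam k τ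
      ≤ (N.choose k : ℝ) *
        Real.exp (lam^2/8 * ∑ n ∈ Finset.range k, (1/((N:ℝ)-n-1))^2) := by
  intro k
  induction k with
  | zero =>
    intro _
    simp [eBF, xcnt]
  | succ k ih =>
    intro hk1
    have hkN : k < N := Nat.lt_of_succ_lt hk1
    have hk2 : (k:ℝ) + 2 ≤ (N:ℝ) := by exact_mod_cast hk1
    set m := xcnt q (univ : Finset (Fin N)) with hm
    have hmul : (k+1 : ℝ) * ∑ σ ∈ powersetCard (k+1) (univ : Finset (Fin N)), eBF q lam (k+1) σ
        = ∑ τ ∈ powersetCard k (univ : Finset (Fin N)), ∑ i ∈ τᶜ, eBF q lam (k+1) (insert i τ) :=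
      (sum_insert_compl k _).symm
    -- bound the inner sum for each τ
    have inner_bound : ∀ τ ∈ powersetCard k (univ : Finset (Fin N)),
        ∑ i ∈ τᶜ, eBF q lam (k+1) (insert i τ)
          ≤ ((N:ℝ) - k) * eBF q lam k τ * Real.exp (lam^2/(8*((N:ℝ)-k-1)^2)) := by
      intro τ hτ
      have hcard : τ.card = k := (Finset.mem_powersetCard.1 hτ).2
      have hxm : xcnt q τ ≤ m := by
        rw [hm]; exact Finset.card_le_card (Finset.filter_subset_filter _ (Finset.subset_univ τ))
      have hcc : xcnt q τᶜ = m - xcnt q τ := by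
        have := xcnt_compl_add q τ; omega
      have hcompl_card : τᶜ.card = N - k := by
        rw [Finset.card_compl, hcard, Fintype.card_fin]
      have hccle : xcnt q τᶜ ≤ N - k := hcompl_card ▸ xcnt_le_card q τᶜ
      set x := xcnt q τ with hx
      set R : ℝ := (m:ℝ) - (x:ℝ) with hRdef
      set j : ℝ := (N:ℝ) - (k:ℝ) with hjdef
      have hR0 : 0 ≤ R := by
        rw [hRdef]
        have : (x:ℝ) ≤ (m:ℝ) := by exact_mod_cast hxm
        linarith
      have hRj : R ≤ j := by
        have hnatle : m - x ≤ N - k := hcc ▸ hccle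
        rw [hRdef, hjdef, ← Nat.cast_sub hxm, ← Nat.cast_sub (le_of_lt hkN)]
        exact_mod_cast hnatle
      have hj2 : 2 ≤ j := by rw [hjdef]; linarith
      set C : ℝ := lam * ((m:ℝ)/(N:ℝ)) with hC
      -- split the inner sum according to the value of q i
      have hsum_split :
          ∑ i ∈ τᶜ, eBF q lam (k+1) (insert i τ)
            = R * Real.exp (C - lam * ((R-1)/(j-1)))
              + (j - R) * Real.exp (C - lam * (R/(j-1))) := by
        rw [← Finset.sum_filter_add_sum_filter_not τᶜ (fun i => q i = true)]
        have hA : ∀ i ∈ τᶜ.filter (fun i => q i = true),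
            eBF q lam (k+1) (insert i τ) = Real.exp (C - lam * ((R-1)/(j-1))) := by
          intro i hi
          rw [Finset.mem_filter, Finset.mem_compl] at hi
          unfold eBF
          rw [xcnt_insert q τ hi.1, if_pos hi.2]
          congr 1
          rw [hC, hRdef, hjdef]
          push_cast
          ring
        have hB : ∀ i ∈ τᶜ.filter (fun i => ¬ q i = true),
            eBF q lam (k+1) (insert i τ) = Real.exp (C - lam * (R/(j-1))) := by
          intro i hi
          rw [Finset.mem_filter, Finset.mem_compl] at hi
          unfold eBF
          rw [xcnt_insert q τ hi.1, if_neg hi.2]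
          congr 1
          rw [hC, hRdef, hjdef]
          push_cast
          ring
        rw [Finset.sum_congr rfl hA, Finset.sum_congr rfl hB,
          Finset.sum_const, Finset.sum_const]
        have hcA : (τᶜ.filter (fun i => q i = true)).card = m - x := by
          have : τᶜ.filter (fun i => q i = true) = τᶜ.filter (fun i => q i = true) := rfl
          exact hcc
        have hcB : (τᶜ.filter (fun i => ¬ q i = true)).card = (N - k) - (m - x) := by
          have hfadd := Finset.card_filter_add_card_filter_not
            (s := τᶜ) (p := fun i => q i = true)
          rw [hcompl_card] at hfadd
          have : (τᶜ.filter (fun i => q i = true)).card = m - x := hcA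
          omega
        rw [hcA, hcB]
        have hnatle : m - x ≤ N - k := hcc ▸ hccle
        have c1 : ((m - x : ℕ):ℝ) = R := by
          rw [hRdef, Nat.cast_sub hxm]
        have c2 : (((N - k) - (m - x) : ℕ):ℝ) = j - R := by
          rw [Nat.cast_sub hnatle, Nat.cast_sub (le_of_lt hkN), Nat.cast_sub hxm,
            hRdef, hjdef]
        rw [nsmul_eq_mul, nsmul_eq_mul, c1, c2]
      rw [hsum_split]
      have hstep := step_scalar hR0 hRj hj2 lam C
      have heq : ((N:ℝ) - k) * eBF q lam k τ * Real.exp (lam^2/(8*((N:ℝ)-k-1)^2))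
          = j * Real.exp (C - lam*(R/j) + lam^2/(8*(j-1)^2)) := by
        unfold eBF
        rw [hjdef, mul_assoc, ← Real.exp_add]
        congr 2
        rw [hC, hRdef]
        ring
      rw [heq]
      exact hstep
    -- combine
    have hsum_le : ∑ τ ∈ powersetCard k (univ : Finset (Fin N)),
          ∑ i ∈ τᶜ, eBF q lam (k+1) (insert i τ)
        ≤ (((N:ℝ) - k) * Real.exp (lam^2/(8*((N:ℝ)-k-1)^2))) *
            ∑ τ ∈ powersetCard k (univ : Finset (Fin N)), eBF q lam k τ := by
      rw [Finset.mul_sum]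
      apply Finset.sum_le_sum
      intro τ hτ
      calc ∑ i ∈ τᶜ, eBF q lam (k+1) (insert i τ)
          ≤ ((N:ℝ) - k) * eBF q lam k τ * Real.exp (lam^2/(8*((N:ℝ)-k-1)^2)) :=
            inner_bound τ hτ
        _ = (((N:ℝ) - k) * Real.exp (lam^2/(8*((N:ℝ)-k-1)^2))) * eBF q lam k τ := by ring
    have hIH := ih hkN
    have hfac : (0:ℝ) ≤ ((N:ℝ) - k) * Real.exp (lam^2/(8*((N:ℝ)-k-1)^2)) := by
      have : (0:ℝ) ≤ (N:ℝ) - k := by linarith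
      positivity
    have hchain : (k+1 : ℝ) * ∑ σ ∈ powersetCard (k+1) (univ : Finset (Fin N)), eBF q lam (k+1) σ
        ≤ (((N:ℝ) - k) * Real.exp (lam^2/(8*((N:ℝ)-k-1)^2))) *
            ((N.choose k : ℝ) * Real.exp (lam^2/8 * ∑ n ∈ Finset.range k, (1/((N:ℝ)-n-1))^2)) := by
      rw [hmul]
      exact le_trans hsum_le (mul_le_mul_of_nonneg_left hIH hfac)
    have hrhs : (((N:ℝ) - k) * Real.exp (lam^2/(8*((N:ℝ)-k-1)^2))) *
            ((N.choose k : ℝ) * Real.exp (lam^2/8 * ∑ n ∈ Finset.range k, (1/((N:ℝ)-n-1))^2))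
        = (k+1 : ℝ) * ((N.choose (k+1) : ℝ) *
            Real.exp (lam^2/8 * ∑ n ∈ Finset.range (k+1), (1/((N:ℝ)-n-1))^2)) := by
      have hch : (N.choose (k+1) : ℝ) * (k+1 : ℝ) = (N.choose k : ℝ) * ((N:ℝ) - k) := by
        have := Nat.choose_succ_right_eq N k
        have hcast : ((N.choose (k+1) * (k+1) : ℕ):ℝ) = ((N.choose k * (N - k) : ℕ):ℝ) := by
          exact_mod_cast congrArg (Nat.cast : ℕ → ℝ) this
        push_cast [Nat.cast_sub (le_of_lt hkN)] at hcast
        convert hcast using 2 <;> push_cast <;> ring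
      have hexp : Real.exp (lam^2/(8*((N:ℝ)-k-1)^2)) *
          Real.exp (lam^2/8 * ∑ n ∈ Finset.range k, (1/((N:ℝ)-n-1))^2)
          = Real.exp (lam^2/8 * ∑ n ∈ Finset.range (k+1), (1/((N:ℝ)-n-1))^2) := by
        rw [← Real.exp_add]
        congr 1
        rw [Finset.sum_range_succ, mul_add, add_comm]
        congr 1
        have ha : ((N:ℝ) - (k:ℝ) - 1) ≠ 0 := by
          have : (k:ℝ) + 2 ≤ (N:ℝ) := hk2
          intro h; nlinarith
        field_simp

      calc (((N:ℝ) - k) * Real.exp (lam^2/(8*((N:ℝ)-k-1)^2))) *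
            ((N.choose k : ℝ) * Real.exp (lam^2/8 * ∑ n ∈ Finset.range k, (1/((N:ℝ)-n-1))^2))
          = ((N.choose k : ℝ) * ((N:ℝ) - k)) *
              (Real.exp (lam^2/(8*((N:ℝ)-k-1)^2)) *
                Real.exp (lam^2/8 * ∑ n ∈ Finset.range k, (1/((N:ℝ)-n-1))^2)) := by ring
        _ = ((N.choose (k+1) : ℝ) * (k+1 : ℝ)) *
              Real.exp (lam^2/8 * ∑ n ∈ Finset.range (k+1), (1/((N:ℝ)-n-1))^2) := by
            rw [hch, hexp]
        _ = (k+1 : ℝ) * ((N.choose (k+1) : ℝ) *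
              Real.exp (lam^2/8 * ∑ n ∈ Finset.range (k+1), (1/((N:ℝ)-n-1))^2)) := by ring
    rw [hrhs] at hchain
    have hk1pos : (0:ℝ) < (k+1 : ℝ) := by positivity
    calc ∑ σ ∈ powersetCard (k+1) (univ : Finset (Fin N)), eBF q lam (k+1) σ
        ≤ (N.choose (k+1) : ℝ) *
            Real.exp (lam^2/8 * ∑ n ∈ Finset.range (k+1), (1/((N:ℝ)-n-1))^2) :=
          (mul_le_mul_iff_right₀ hk1pos).1 hchain

/-- Bound on the variance-like sum. -/
lemma Vsum_bound {N K : ℕ} (hK : 1 ≤ K) (hKN : 2*K ≤ N) :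
    ∑ n ∈ Finset.range K, (1/((N:ℝ)-n-1))^2 ≤ 2*K*((N:ℝ)+2)/(N:ℝ)^3 := by
  have hKN' : K ≤ N := by omega
  have hN1 : 1 ≤ N := le_trans hK hKN'
  set Mr : ℝ := (N:ℝ) - K with hMr
  have hNr : (0:ℝ) < N := by exact_mod_cast Nat.pos_of_ne_zero (by omega)
  have hKr : (1:ℝ) ≤ (K:ℝ) := by exact_mod_cast hK
  have h2M : (N:ℝ) ≤ 2*Mr := by
    rw [hMr]
    have : (2*K:ℝ) ≤ (N:ℝ) := by exact_mod_cast hKN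
    push_cast at this ⊢
    linarith
  have hM1 : (1:ℝ) ≤ Mr := by nlinarith
  have hM0 : (0:ℝ) < Mr := by linarith
  have hpt : ∀ n ∈ Finset.range K,
      (1/((N:ℝ)-n-1))^2 ≤ (1 + 1/Mr) * (1/((N:ℝ)-(n+1)) - 1/((N:ℝ)-n)) := by
    intro n hn
    rw [Finset.mem_range] at hn
    have hnK : (n:ℝ) + 1 ≤ (K:ℝ) := by exact_mod_cast hn
    set a : ℝ := (N:ℝ) - n - 1 with ha
    have haM : Mr ≤ a := by rw [ha, hMr]; linarith
    have ha0 : (0:ℝ) < a := lt_of_lt_of_le hM0 haM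
    have ha1 : (0:ℝ) < a + 1 := by linarith
    have key : (1/a)^2 ≤ (1 + 1/Mr) * (1/a - 1/(a+1)) := by
      have h1 : 1/a ≤ 1/Mr := by
        apply div_le_div_of_nonneg_left (by norm_num) hM0 haM
      have hdiff : 1/a - 1/(a+1) = 1/(a*(a+1)) := by field_simp; ring
      rw [hdiff, mul_one_div, div_pow, one_pow, div_le_div_iff₀ (by positivity) (by positivity)]
      have haa : (1+1/a)*a^2 = 1*(a*(a+1)) := by field_simp
      nlinarith [mul_le_mul_of_nonneg_right h1 (sq_nonneg a), haa]
    have e1 : (N:ℝ)-(n+1) = a := by rw [ha]; push_cast; ring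
    have e2 : (N:ℝ)-n = a + 1 := by rw [ha]; ring
    rw [e1, e2]
    exact key
  have htel : ∑ n ∈ Finset.range K, (1/((N:ℝ)-(n+1)) - 1/((N:ℝ)-n))
      = 1/Mr - 1/(N:ℝ) := by
    have := Finset.sum_range_sub (f := fun n : ℕ => 1/((N:ℝ)-n)) K
    simp only [Nat.cast_zero, sub_zero] at this
    rw [hMr]
    calc ∑ n ∈ Finset.range K, (1/((N:ℝ)-(n+1)) - 1/((N:ℝ)-n))
        = ∑ n ∈ Finset.range K, (1/((N:ℝ)-((n+1:ℕ):ℝ)) - 1/((N:ℝ)-n)) := by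
          apply Finset.sum_congr rfl; intro n _; push_cast; ring_nf
      _ = 1/((N:ℝ)-K) - 1/((N:ℝ)) := by rw [this]
  calc ∑ n ∈ Finset.range K, (1/((N:ℝ)-n-1))^2
      ≤ ∑ n ∈ Finset.range K, (1 + 1/Mr) * (1/((N:ℝ)-(n+1)) - 1/((N:ℝ)-n)) :=
        Finset.sum_le_sum hpt
    _ = (1 + 1/Mr) * (1/Mr - 1/(N:ℝ)) := by rw [← Finset.mul_sum, htel]
    _ ≤ 2*K*((N:ℝ)+2)/(N:ℝ)^3 := by
        have hKeq : (K:ℝ) = (N:ℝ) - Mr := by rw [hMr]; ring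
        have hL : (1 + 1/Mr) * (1/Mr - 1/(N:ℝ)) = (Mr+1)*((N:ℝ)-Mr)/(Mr^2*(N:ℝ)) := by
          field_simp
        rw [hKeq, hL, div_le_div_iff₀ (by positivity) (by positivity)]
        have h4M : (N:ℝ)^2 ≤ 4*Mr^2 := by nlinarith
        have hNM : (N:ℝ) - Mr ≥ 0 := by
          rw [← hKeq]; positivity
        nlinarith [mul_le_mul_of_nonneg_left h4M hNM,
          mul_le_mul_of_nonneg_left h2M (mul_nonneg (le_of_lt hNr) (mul_nonneg hNM (le_of_lt hM0)))]

/-- One-sided tail bound for the sampling estimate. -/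
lemma tail_one_sided {N K : ℕ} (q : Fin N → Bool) (hK : 0 < K) (hKN : 2*K ≤ N)
    {δ : ℝ} (hδ : 0 < δ) :
    (((univ : Finset (Finset (Fin N))).filter fun τ =>
        τ.card = K ∧ δ < (xcnt q τ : ℝ)/(K:ℝ)
          - ((xcnt q univ : ℝ) - (xcnt q τ : ℝ))/((N:ℝ) - K)).card : ℝ)
      ≤ (N.choose K : ℝ) * Real.exp (-(δ^2*K*N)/((N:ℝ)+2)) := by
  have hKN' : K < N := by omega
  have hN0 : (0:ℝ) < N := by exact_mod_cast (by omega : 0 < N)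
  have hKr : (0:ℝ) < K := by exact_mod_cast hK
  have hNK : (0:ℝ) < (N:ℝ) - K := by
    have : (K:ℝ) < (N:ℝ) := by exact_mod_cast hKN'
    linarith
  set m := xcnt q (univ : Finset (Fin N)) with hm
  set t : ℝ := δ * K / N with ht
  have ht0 : 0 < t := by rw [ht]; positivity
  set V : ℝ := ∑ n ∈ Finset.range K, (1/((N:ℝ)-n-1))^2 with hV
  have hV0 : 0 < V := by
    rw [hV]
    apply Finset.sum_pos
    · intro n hn
      rw [Finset.mem_range] at hn
      have h1 : (n:ℝ) + 1 ≤ (K:ℝ) := by exact_mod_cast hn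
      have : (0:ℝ) < (N:ℝ) - n - 1 := by
        have : (K:ℝ) < (N:ℝ) := by exact_mod_cast hKN'
        linarith
      positivity
    · exact Finset.nonempty_range_iff.2 (by omega)
  set lam : ℝ := 4 * t / V with hlam
  have hlam0 : 0 < lam := by rw [hlam]; positivity
  -- indicator bound
  set bad := (univ : Finset (Finset (Fin N))).filter fun τ =>
      τ.card = K ∧ δ < (xcnt q τ : ℝ)/(K:ℝ) - ((m:ℝ) - (xcnt q τ : ℝ))/((N:ℝ) - K) with hbad
  have hsub : bad ⊆ powersetCard K (univ : Finset (Fin N)) := by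
    intro τ hτ
    rw [hbad, Finset.mem_filter] at hτ
    exact Finset.mem_powersetCard.2 ⟨Finset.subset_univ _, hτ.2.1⟩
  have hind : ∀ τ ∈ bad, Real.exp (lam * t) ≤ eBF q lam K τ := by
    intro τ hτ
    rw [hbad, Finset.mem_filter] at hτ
    obtain ⟨_, hcard, hev⟩ := hτ
    unfold eBF
    apply Real.exp_le_exp.2
    have hiden : (m:ℝ)/(N:ℝ) - ((m:ℝ) - (xcnt q τ : ℝ))/((N:ℝ) - K)
        = ((K:ℝ)/(N:ℝ)) * ((xcnt q τ : ℝ)/(K:ℝ) - ((m:ℝ) - (xcnt q τ : ℝ))/((N:ℝ) - K)) := by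
      field_simp
      ring
    have h1 : ((K:ℝ)/(N:ℝ))*δ ≤ ((K:ℝ)/(N:ℝ)) *
        ((xcnt q τ : ℝ)/(K:ℝ) - ((m:ℝ) - (xcnt q τ : ℝ))/((N:ℝ) - K)) :=
      mul_le_mul_of_nonneg_left (le_of_lt hev) (by positivity)
    have h2 : t = ((K:ℝ)/(N:ℝ))*δ := by rw [ht]; ring
    have h3 : t ≤ (m:ℝ)/(N:ℝ) - ((m:ℝ) - (xcnt q τ : ℝ))/((N:ℝ) - K) := by
      rw [hiden, h2]; exact h1
    exact mul_le_mul_of_nonneg_left h3 (le_of_lt hlam0)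
  -- Chernoff counting
  have hcount : (bad.card : ℝ) * Real.exp (lam * t)
      ≤ (N.choose K : ℝ) * Real.exp (lam^2/8 * V) := by
    calc (bad.card : ℝ) * Real.exp (lam * t)
        = ∑ _τ ∈ bad, Real.exp (lam * t) := by
          rw [Finset.sum_const, nsmul_eq_mul]
      _ ≤ ∑ τ ∈ bad, eBF q lam K τ := Finset.sum_le_sum hind
      _ ≤ ∑ τ ∈ powersetCard K (univ : Finset (Fin N)), eBF q lam K τ :=
          Finset.sum_le_sum_of_subset_of_nonneg hsub
            (fun τ _ _ => le_of_lt (Real.exp_pos _))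
      _ ≤ (N.choose K : ℝ) * Real.exp (lam^2/8 * V) := mgf_bound q lam K hKN'
  have hA : (bad.card : ℝ) ≤ (N.choose K : ℝ) * Real.exp (lam^2/8*V - lam*t) := by
    calc (bad.card : ℝ)
        = (bad.card : ℝ) * Real.exp (lam*t) * Real.exp (-(lam*t)) := by
          rw [mul_assoc, ← Real.exp_add]; simp
      _ ≤ ((N.choose K : ℝ) * Real.exp (lam^2/8*V)) * Real.exp (-(lam*t)) :=
          mul_le_mul_of_nonneg_right hcount (le_of_lt (Real.exp_pos _))
      _ = (N.choose K : ℝ) * Real.exp (lam^2/8*V - lam*t) := by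
          rw [mul_assoc, ← Real.exp_add]; ring_nf
  have hopt : lam^2/8*V - lam*t = -(2*t^2/V) := by
    rw [hlam]; field_simp; ring
  have hexp_le : lam^2/8*V - lam*t ≤ -(δ^2*K*N)/((N:ℝ)+2) := by
    rw [hopt]
    have hVb : V ≤ 2*K*((N:ℝ)+2)/(N:ℝ)^3 := Vsum_bound (by omega) hKN
    have hBpos : (0:ℝ) < 2*K*((N:ℝ)+2)/(N:ℝ)^3 := by positivity
    have hdd : 2*t^2/(2*K*((N:ℝ)+2)/(N:ℝ)^3) ≤ 2*t^2/V :=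
      div_le_div_of_nonneg_left (by positivity) hV0 hVb
    have heq2 : 2*t^2/(2*K*((N:ℝ)+2)/(N:ℝ)^3) = δ^2*K*N/((N:ℝ)+2) := by
      rw [ht]; field_simp
    rw [neg_div]
    rw [heq2] at hdd
    linarith
  calc (bad.card : ℝ)
      ≤ (N.choose K : ℝ) * Real.exp (lam^2/8*V - lam*t) := hA
    _ ≤ (N.choose K : ℝ) * Real.exp (-(δ^2*K*N)/((N:ℝ)+2)) := by
        apply mul_le_mul_of_nonneg_left (Real.exp_le_exp.2 hexp_le) (by positivity)

lemma xcnt_not {N : ℕ} (q : Fin N → Bool) (τ : Finset (Fin N)) :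
    xcnt (fun l => !(q l)) τ = τ.card - xcnt q τ := by
  unfold xcnt
  have heq : τ.filter (fun l => (!(q l)) = true) = τ.filter (fun l => ¬(q l = true)) := by
    apply Finset.filter_congr; intro i _; simp
  rw [heq]
  have := Finset.card_filter_add_card_filter_not (s := τ) (p := fun l => q l = true)
  omega

/-- The relative Hamming weight of a binary string restricted to a set of
positions: the fraction of ones among the positions in `τ`. -/
noncomputable def relWtOn {N : ℕ} (q : Fin N → Bool) (τ : Finset (Fin N)) : ℝ :=
  ((τ.filter fun l => q l = true).card : ℝ) / τ.card

/-- Bouman–Fehr classical sampling bound (Serfling-type): for uniform sampling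
of a subset `τ` of size `k ≤ N/2`, for every `q ∈ {0,1}^N`,
`Pr(|w(q_τ) - w(q_{-τ})| > δ) ≤ 2 exp(-δ²kN/(N+2))`. -/
theorem stmt14 (N k : ℕ) (hk : 0 < k) (hkN : 2 * k ≤ N)
    (δ : ℝ) (hδ : 0 < δ) (q : Fin N → Bool) :
    ((Finset.univ.filter fun τ : Finset (Fin N) =>
        τ.card = k ∧ δ < |relWtOn q τ - relWtOn q τᶜ|).card : ℝ)
        / (N.choose k : ℝ)
      ≤ 2 * Real.exp (-(δ ^ 2 * k * N) / (N + 2)) := by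
  have hkN' : k ≤ N := by omega
  have hkNlt : k < N := by omega
  have hchoose : (0:ℝ) < (N.choose k : ℝ) := by exact_mod_cast Nat.choose_pos hkN'
  rw [div_le_iff₀ hchoose]
  set q' : Fin N → Bool := fun l => !(q l) with hq'
  set B₁ := (univ : Finset (Finset (Fin N))).filter (fun τ =>
      τ.card = k ∧ δ < (xcnt q τ : ℝ)/(k:ℝ)
        - ((xcnt q univ : ℝ) - (xcnt q τ : ℝ))/((N:ℝ) - k)) with hB₁
  set B₂ := (univ : Finset (Finset (Fin N))).filter (fun τ =>
      τ.card = k ∧ δ < (xcnt q' τ : ℝ)/(k:ℝ)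
        - ((xcnt q' univ : ℝ) - (xcnt q' τ : ℝ))/((N:ℝ) - k)) with hB₂
  have hsub : (Finset.univ.filter fun τ : Finset (Fin N) =>
      τ.card = k ∧ δ < |relWtOn q τ - relWtOn q τᶜ|) ⊆ B₁ ∪ B₂ := by
    intro τ hτ
    rw [Finset.mem_filter] at hτ
    obtain ⟨htuniv, hcard, habs⟩ := hτ
    have hxk : xcnt q τ ≤ k := hcard ▸ xcnt_le_card q τ
    have hxm : xcnt q τ ≤ xcnt q univ :=
      Finset.card_le_card (Finset.filter_subset_filter _ (Finset.subset_univ τ))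
    have hmN : xcnt q univ ≤ N := by
      have := xcnt_le_card q (univ : Finset (Fin N))
      simpa using this
    have hccard : τᶜ.card = N - k := by
      rw [Finset.card_compl, hcard, Fintype.card_fin]
    have hcfilter : xcnt q τᶜ = xcnt q univ - xcnt q τ := by
      have := xcnt_compl_add q τ; omega
    have hwτ : relWtOn q τ = (xcnt q τ : ℝ)/(k:ℝ) := by
      unfold relWtOn xcnt; rw [hcard]
    have hwc : relWtOn q τᶜ = ((xcnt q univ : ℝ) - (xcnt q τ : ℝ))/((N:ℝ) - k) := by
      unfold relWtOn
      have h1 : (τᶜ.filter fun l => q l = true).card = xcnt q univ - xcnt q τ := hcfilter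
      rw [h1, hccard, Nat.cast_sub hxm, Nat.cast_sub hkN']
    rw [hwτ, hwc] at habs
    rcases lt_abs.1 habs with hpos | hneg
    · apply Finset.mem_union_left
      rw [hB₁, Finset.mem_filter]
      exact ⟨htuniv, hcard, hpos⟩
    · apply Finset.mem_union_right
      rw [hB₂, Finset.mem_filter]
      refine ⟨htuniv, hcard, ?_⟩
      have hx'τ : (xcnt q' τ : ℝ) = (k:ℝ) - (xcnt q τ : ℝ) := by
        rw [hq', xcnt_not q τ, hcard, Nat.cast_sub hxk]
      have hx'univ : (xcnt q' univ : ℝ) = (N:ℝ) - (xcnt q univ : ℝ) := by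
        rw [hq', xcnt_not q univ, Finset.card_univ, Fintype.card_fin, Nat.cast_sub hmN]
      have hflip : (xcnt q' τ : ℝ)/(k:ℝ)
          - ((xcnt q' univ : ℝ) - (xcnt q' τ : ℝ))/((N:ℝ) - k)
          = -((xcnt q τ : ℝ)/(k:ℝ)
              - ((xcnt q univ : ℝ) - (xcnt q τ : ℝ))/((N:ℝ) - k)) := by
        rw [hx'τ, hx'univ]
        have hk0 : (k:ℝ) ≠ 0 := by positivity
        have hNk : ((N:ℝ) - k) ≠ 0 := by
          have : (k:ℝ) < (N:ℝ) := by exact_mod_cast hkNlt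
          intro h; linarith
        field_simp
        ring
      rw [hflip]
      exact hneg
  have ht1 := tail_one_sided q hk hkN hδ
  have ht2 := tail_one_sided q' hk hkN hδ
  calc ((Finset.univ.filter fun τ : Finset (Fin N) =>
        τ.card = k ∧ δ < |relWtOn q τ - relWtOn q τᶜ|).card : ℝ)
      ≤ ((B₁ ∪ B₂).card : ℝ) := by
        exact_mod_cast Finset.card_le_card hsub
    _ ≤ (B₁.card : ℝ) + (B₂.card : ℝ) := by
        exact_mod_cast Finset.card_union_le B₁ B₂
    _ ≤ (N.choose k : ℝ) * Real.exp (-(δ^2*k*N)/((N:ℝ)+2))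
        + (N.choose k : ℝ) * Real.exp (-(δ^2*k*N)/((N:ℝ)+2)) := add_le_add ht1 ht2
    _ = 2 * Real.exp (-(δ ^ 2 * k * N) / (N + 2)) * (N.choose k : ℝ) := by
        push_cast
        ring
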